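/- Let R be a weakly bleached local ring and let A(x) ∈ T_2(R[[x]]) be a 2×2 upper triangular matrix with power series entries, with A(0) ∈ T_2(R) the matrix of constant coefficients. Then A(x) is very clean in T_2(R[[x]]) if and only if A(0) is very clean in T_2(R). -/

import Mathlib

/-- An element `a` of a ring is *very clean* if there is an idempotent `e` commuting with `a`
such that `a - e` or `a + e` is a unit. -/
def IsVeryClean {R : Type*} [Ring R] (a : R) : Prop :=
  ∃ e : R, IsIdempotentElem e ∧ a * e = e * a ∧ (IsUnit (a - e) ∨ IsUnit (a + e))

/-- A ring is *very clean* if every element is very clean. -/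
def VeryCleanRing (R : Type*) [Ring R] : Prop :=
  ∀ a : R, IsVeryClean a

/-- An element `a` of a ring is *strongly clean* if there is an idempotent `e` commuting with `a`
such that `a - e` is a unit. -/
def IsStronglyClean {R : Type*} [Ring R] (a : R) : Prop :=
  ∃ e : R, IsIdempotentElem e ∧ a * e = e * a ∧ IsUnit (a - e)

/-- A ring is *strongly clean* if every element is strongly clean. -/
def StronglyCleanRing (R : Type*) [Ring R] : Prop :=
  ∀ a : R, IsStronglyClean a

/-- The ring `T₂(R)` of 2×2 upper triangular matrices over `R`,
as a subring of the full 2×2 matrix ring. -/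
def T2 (R : Type*) [Ring R] : Subring (Matrix (Fin 2) (Fin 2) R) where
  carrier := {A | A 1 0 = 0}
  zero_mem' := rfl
  one_mem' := Matrix.one_apply_ne (by decide)
  add_mem' := by
    intro A B hA hB
    simp only [Set.mem_setOf_eq] at *
    simp [Matrix.add_apply, hA, hB]
  neg_mem' := by
    intro A hA
    simp only [Set.mem_setOf_eq] at *
    simp [Matrix.neg_apply, hA]
  mul_mem' := by
    intro A B hA hB
    simp only [Set.mem_setOf_eq] at *
    simp [Matrix.mul_apply, Fin.sum_univ_two, hA, hB]

theorem mem_T2_iff {R : Type*} [Ring R] {A : Matrix (Fin 2) (Fin 2) R} :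
    A ∈ T2 R ↔ A 1 0 = 0 := Iff.rfl

/-- A local ring `R` is *weakly bleached* if for every `a ∈ 1 + J(R)` and every `b ∈ J(R)`,
the abelian group endomorphisms `x ↦ a * x - x * b` and `x ↦ b * x - x * a` of `R`
are both surjective. -/
def WeaklyBleached (R : Type*) [Ring R] : Prop :=
  ∀ a b : R, a - 1 ∈ (⊥ : Ideal R).jacobson → b ∈ (⊥ : Ideal R).jacobson →
    Function.Surjective (fun x : R => a * x - x * b) ∧
    Function.Surjective (fun x : R => b * x - x * a)

open Finset PowerSeries

/-! ### Auxiliary recursion device for power series -/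

section Rec
variable {R : Type*} [Ring R]

/-- Prefix recursion device: `preRec F n` records the values of the recursively defined
function at all indices `< n`. -/
noncomputable def preRec (F : ℕ → (ℕ → R) → R) : ℕ → (ℕ → R)
  | 0 => fun _ => 0
  | n + 1 => Function.update (preRec F n) n (F n (preRec F n))

/-- The function defined by recursion on the prefix of earlier values. -/
noncomputable def recFun (F : ℕ → (ℕ → R) → R) (n : ℕ) : R := F n (preRec F n)

lemma preRec_eq (F : ℕ → (ℕ → R) → R) : ∀ n m, m < n → preRec F n m = recFun F m := by
  intro n
  induction n with
  | zero => intro m hm; omega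
  | succ n ih =>
    intro m hm
    rcases Nat.lt_succ_iff_lt_or_eq.mp hm with h | rfl
    · rw [preRec, Function.update_of_ne (by omega), ih m h]
    · rw [preRec, Function.update_self, recFun]

end Rec

section Lift
variable {R : Type*} [Ring R]

/-- If `y ↦ a₀ y - y b₀` is surjective on `R`, then `s ↦ a s - s b` is surjective on `R⟦X⟧`. -/
theorem surj_lift (a b : PowerSeries R)
    (h : Function.Surjective fun y : R => (constantCoeff a) * y - y * (constantCoeff b)) :
    Function.Surjective fun s : PowerSeries R => a * s - s * b := by
  choose σ hσ using h
  simp only at hσ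
  intro c
  set F : ℕ → (ℕ → R) → R := fun n h =>
    σ ((coeff n) c - ∑ p ∈ (antidiagonal n).erase (0, n), coeff p.1 a * h p.2
        + ∑ p ∈ (antidiagonal n).erase (n, 0), h p.1 * coeff p.2 b) with hF
  set s : ℕ → R := recFun F with hsdef
  have hkey : ∀ n, s n = σ ((coeff n) c - ∑ p ∈ (antidiagonal n).erase (0, n),
      coeff p.1 a * s p.2
        + ∑ p ∈ (antidiagonal n).erase (n, 0), s p.1 * coeff p.2 b) := by
    intro n
    have h1 : ∀ p ∈ (antidiagonal n).erase (0, n), preRec F n p.2 = s p.2 := by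
      intro p hp
      obtain ⟨hne, hmem⟩ := Finset.mem_erase.mp hp
      rw [Finset.HasAntidiagonal.mem_antidiagonal] at hmem
      have : p.2 < n := by
        rcases Nat.lt_or_ge p.2 n with h | h
        · exact h
        · exfalso; apply hne; have : p.1 = 0 ∧ p.2 = n := by omega
          exact Prod.ext this.1 this.2
      exact preRec_eq F n p.2 this
    have h2 : ∀ p ∈ (antidiagonal n).erase (n, 0), preRec F n p.1 = s p.1 := by
      intro p hp
      obtain ⟨hne, hmem⟩ := Finset.mem_erase.mp hp
      rw [Finset.HasAntidiagonal.mem_antidiagonal] at hmem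
      have : p.1 < n := by
        rcases Nat.lt_or_ge p.1 n with h | h
        · exact h
        · exfalso; apply hne; have : p.1 = n ∧ p.2 = 0 := by omega
          exact Prod.ext this.1 this.2
      exact preRec_eq F n p.1 this
    have e1 : ∑ p ∈ (antidiagonal n).erase (0, n), coeff p.1 a * preRec F n p.2
        = ∑ p ∈ (antidiagonal n).erase (0, n), coeff p.1 a * s p.2 :=
      Finset.sum_congr rfl (fun p hp => by rw [h1 p hp])
    have e2 : ∑ p ∈ (antidiagonal n).erase (n, 0), preRec F n p.1 * coeff p.2 b
        = ∑ p ∈ (antidiagonal n).erase (n, 0), s p.1 * coeff p.2 b :=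
      Finset.sum_congr rfl (fun p hp => by rw [h2 p hp])
    show F n (preRec F n) = _
    rw [hF]
    simp only
    rw [e1, e2]
  refine ⟨PowerSeries.mk s, ?_⟩
  ext n
  simp only [map_sub, PowerSeries.coeff_mul, PowerSeries.coeff_mk]
  rw [← Finset.add_sum_erase _ _
        (Finset.HasAntidiagonal.mem_antidiagonal.mpr (zero_add n) : ((0 : ℕ), n) ∈ antidiagonal n),
      ← Finset.add_sum_erase _ (fun p => s p.1 * coeff p.2 b)
        (Finset.HasAntidiagonal.mem_antidiagonal.mpr (add_zero n) : (n, (0 : ℕ)) ∈ antidiagonal n)]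
  simp only [PowerSeries.coeff_zero_eq_constantCoeff]
  set T := ∑ p ∈ (antidiagonal n).erase (0, n), coeff p.1 a * s p.2 with hT
  set U := ∑ p ∈ (antidiagonal n).erase (n, 0), s p.1 * coeff p.2 b with hU
  have hsn : s n = σ ((coeff n) c - T + U) := hkey n
  have h2 := hσ ((coeff n) c - T + U)
  rw [hsn]
  have : constantCoeff a * σ (coeff n c - T + U) + T -
      (σ (coeff n c - T + U) * constantCoeff b + U)
      = (constantCoeff a * σ (coeff n c - T + U) -
          σ (coeff n c - T + U) * constantCoeff b) + T - U := by abel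
  rw [this, h2]
  abel

/-- A power series whose constant coefficient is a unit is itself a unit
(no commutativity needed). -/
theorem isUnit_ps (f : PowerSeries R) (hf : IsUnit (constantCoeff f)) : IsUnit f := by
  obtain ⟨u, hu⟩ := hf
  have h1 : Function.Surjective fun y : R =>
      (constantCoeff f) * y - y * (constantCoeff (0 : PowerSeries R)) := by
    intro r
    refine ⟨↑u⁻¹ * r, ?_⟩
    simp [← hu, ← mul_assoc]
  have h2 : Function.Surjective fun y : R =>
      (constantCoeff (0 : PowerSeries R)) * y - y * (constantCoeff f) := by
    intro r
    refine ⟨-(r * ↑u⁻¹), ?_⟩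
    simp [← hu, mul_assoc]
  obtain ⟨g, hg⟩ := surj_lift f 0 h1 1
  obtain ⟨h, hh⟩ := surj_lift 0 f h2 (-1)
  simp only [mul_zero, sub_zero, zero_mul, zero_sub, neg_inj] at hg hh
  have hgf : g * f = 1 := by
    have : h = g := by
      calc h = h * (f * g) := by rw [hg, mul_one]
      _ = (h * f) * g := by rw [mul_assoc]
      _ = g := by rw [hh, one_mul]
    rw [← this, hh]
  exact ⟨⟨f, g, hg, hgf⟩, rfl⟩

end Lift

/-! ### Facts about (possibly noncommutative) local rings -/

section LocalLemmas
variable {R : Type*} [Ring R] [IsLocalRing R]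

theorem isUnit_of_left_inv {t a : R} (h : t * a = 1) : IsUnit a := by
  have he : a * t * (a * t) = a * t := by
    rw [mul_assoc, ← mul_assoc t, h, one_mul]
  rcases IsLocalRing.isUnit_or_isUnit_of_add_one
      (show a * t + (1 - a * t) = 1 by abel) with hu | hu
  · obtain ⟨u, hu⟩ := hu
    have h1 : a * t = 1 := by
      calc a * t = (↑u⁻¹ * ↑u) * (a * t) := by rw [u.inv_mul, one_mul]
      _ = ↑u⁻¹ * (a * t * (a * t)) := by rw [hu, mul_assoc]
      _ = ↑u⁻¹ * (a * t) := by rw [he]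
      _ = 1 := by rw [← hu, u.inv_mul]
    exact ⟨⟨a, t, h1, h⟩, rfl⟩
  · obtain ⟨u, hu⟩ := hu
    have h0 : a * t = 0 := by
      have hid : (1 - a * t) * (1 - a * t) = 1 - a * t := by
        simp only [mul_sub, sub_mul, one_mul, mul_one, he]
        abel
      have h1 : (1 : R) - a * t = 1 := by
        calc 1 - a * t = (↑u⁻¹ * ↑u) * (1 - a * t) := by rw [u.inv_mul, one_mul]
        _ = ↑u⁻¹ * ((1 - a * t) * (1 - a * t)) := by rw [hu, mul_assoc]
        _ = ↑u⁻¹ * (1 - a * t) := by rw [hid]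
        _ = 1 := by rw [← hu, u.inv_mul]
      have := congrArg (fun x => 1 - x) h1
      simpa using this
    exfalso
    have : a = 0 := by
      calc a = a * (t * a) := by rw [h, mul_one]
      _ = (a * t) * a := by rw [mul_assoc]
      _ = 0 := by rw [h0, zero_mul]
    rw [this, mul_zero] at h
    exact zero_ne_one h

theorem nonunit_sub_add {a : R} (ha : ¬IsUnit a) : IsUnit (a - 1) ∧ IsUnit (a + 1) := by
  constructor
  · rcases IsLocalRing.isUnit_or_isUnit_of_add_one (show a + (1 - a) = 1 by abel) with h | h
    · exact absurd h ha
    · have := h.neg; rwa [neg_sub] at this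
  · rcases IsLocalRing.isUnit_or_isUnit_of_add_one (show -a + (a + 1) = 1 by abel) with h | h
    · exact absurd (by simpa using h.neg) ha
    · exact h

theorem mem_jacobson_of_nonunit {a : R} (ha : ¬IsUnit a) : a ∈ (⊥ : Ideal R).jacobson := by
  rw [Ideal.mem_jacobson_iff]
  intro y
  have h1 : IsUnit (y * a + 1) := by
    rcases IsLocalRing.isUnit_or_isUnit_of_add_one
        (show -(y * a) + (y * a + 1) = 1 by abel) with h | h
    · exfalso
      obtain ⟨u, hu⟩ := (by simpa using h.neg : IsUnit (y * a))
      exact ha (isUnit_of_left_inv (show (↑u⁻¹ * y) * a = 1 by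
        rw [mul_assoc, ← hu, u.inv_mul]))
    · exact h
  obtain ⟨v, hv⟩ := h1
  refine ⟨↑v⁻¹, ?_⟩
  rw [Ideal.mem_bot, mul_assoc, ← mul_add_one (↑v⁻¹ : R) (y * a), ← hv, v.inv_mul, sub_self]

end LocalLemmas

/-! ### Arithmetic in `T2 S` -/

section T2Lemmas
variable {S : Type*} [Ring S]

/-- The element `[[a, c], [0, b]]` of `T2 S`. -/
def mk2 (a c b : S) : T2 S := ⟨!![a, c; 0, b], by rw [mem_T2_iff]; simp⟩

theorem mk2_mul (a c b a' c' b' : S) :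
    mk2 a c b * mk2 a' c' b' = mk2 (a * a') (a * c' + c * b') (b * b') := by
  apply Subtype.ext
  show (!![a, c; 0, b] : Matrix (Fin 2) (Fin 2) S) * !![a', c'; 0, b']
      = !![a * a', a * c' + c * b'; 0, b * b']
  rw [Matrix.mul_fin_two]
  simp

theorem mk2_sub (a c b a' c' b' : S) :
    mk2 a c b - mk2 a' c' b' = mk2 (a - a') (c - c') (b - b') := by
  apply Subtype.ext
  show (!![a, c; 0, b] : Matrix (Fin 2) (Fin 2) S) - !![a', c'; 0, b']
      = !![a - a', c - c'; 0, b - b']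
  ext i j
  fin_cases i <;> fin_cases j <;> simp

theorem mk2_add (a c b a' c' b' : S) :
    mk2 a c b + mk2 a' c' b' = mk2 (a + a') (c + c') (b + b') := by
  apply Subtype.ext
  show (!![a, c; 0, b] : Matrix (Fin 2) (Fin 2) S) + !![a', c'; 0, b']
      = !![a + a', c + c'; 0, b + b']
  ext i j
  fin_cases i <;> fin_cases j <;> simp

theorem one_T2 : (1 : T2 S) = mk2 1 0 1 := by
  apply Subtype.ext
  show (1 : Matrix (Fin 2) (Fin 2) S) = _
  rw [Matrix.one_fin_two]
  rfl

theorem eta_T2 (A : T2 S) : A = mk2 (A.1 0 0) (A.1 0 1) (A.1 1 1) := by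
  apply Subtype.ext
  show A.1 = !![A.1 0 0, A.1 0 1; 0, A.1 1 1]
  conv_lhs => rw [Matrix.eta_fin_two A.1]
  rw [mem_T2_iff.mp A.2]

theorem isUnit_mk2 {a b : S} (c : S) (ha : IsUnit a) (hb : IsUnit b) :
    IsUnit (mk2 a c b) := by
  obtain ⟨u, hu⟩ := ha
  obtain ⟨v, hv⟩ := hb
  refine ⟨⟨mk2 a c b, mk2 ↑u⁻¹ (-(↑u⁻¹ * (c * ↑v⁻¹))) ↑v⁻¹, ?_, ?_⟩, rfl⟩
  · rw [mk2_mul, ← hu, ← hv, one_T2]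
    congr 1
    · exact u.mul_inv
    · rw [mul_neg, ← mul_assoc, u.mul_inv, one_mul, neg_add_cancel]
    · exact v.mul_inv
  · rw [mk2_mul, ← hu, ← hv, one_T2]
    congr 1
    · exact u.inv_mul
    · rw [neg_mul, mul_assoc (↑u⁻¹ : S) (c * ↑v⁻¹) ↑v, mul_assoc c, v.inv_mul, mul_one,
        add_neg_cancel]
    · exact v.inv_mul

/-- The main abstract lemma: if `S` satisfies the two conditions below (which hold both
for a weakly bleached local ring and for power series over one), then every element of
`T2 S` is very clean. -/
theorem T2_all {S : Type*} [Ring S]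
    (hL : ∀ d : S, IsUnit d ∨ (IsUnit (d - 1) ∧ IsUnit (d + 1)))
    (hW : ∀ a b : S, ¬IsUnit a → ¬IsUnit (b - 1) →
      Function.Surjective (fun y : S => a * y - y * b) ∧
      Function.Surjective (fun y : S => b * y - y * a))
    (A : T2 S) : IsVeryClean A := by
  obtain ⟨a, c, b, rfl⟩ : ∃ a c b, A = mk2 a c b := ⟨_, _, _, eta_T2 A⟩
  by_cases ha : IsUnit a <;> by_cases hb : IsUnit b
  · exact ⟨0, by simp [IsIdempotentElem], by rw [mul_zero, zero_mul],
      Or.inl (by rw [sub_zero]; exact isUnit_mk2 c ha hb)⟩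
  · -- `a` is a unit, `b` is not
    obtain ⟨hb1, hb2⟩ := (hL b).resolve_left hb
    by_cases ha1 : IsUnit (a - 1)
    · refine ⟨1, by simp [IsIdempotentElem], by rw [mul_one, one_mul], Or.inl ?_⟩
      rw [one_T2, mk2_sub, sub_zero]
      exact isUnit_mk2 _ ha1 hb1
    · by_cases ha2 : IsUnit (a + 1)
      · refine ⟨1, by simp [IsIdempotentElem], by rw [mul_one, one_mul], Or.inr ?_⟩
        rw [one_T2, mk2_add, add_zero]
        exact isUnit_mk2 _ ha2 hb2
      · obtain ⟨s, hs⟩ := (hW b a hb ha1).2 (-c)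
        simp only at hs
        have hcomm : a * s + c = s * b := by
          rw [sub_eq_iff_eq_add] at hs
          rw [hs]; abel
        refine ⟨mk2 0 s 1, ?_, ?_, Or.inl ?_⟩
        · show mk2 0 s 1 * mk2 0 s 1 = mk2 0 s 1
          rw [mk2_mul]; simp
        · rw [mk2_mul, mk2_mul]
          simp only [mul_zero, zero_mul, mul_one, one_mul, zero_add]
          rw [hcomm]
        · rw [mk2_sub, sub_zero]
          exact isUnit_mk2 _ ha hb1
  · -- `a` is not a unit, `b` is
    obtain ⟨ha1, ha2⟩ := (hL a).resolve_left ha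
    by_cases hb1 : IsUnit (b - 1)
    · refine ⟨1, by simp [IsIdempotentElem], by rw [mul_one, one_mul], Or.inl ?_⟩
      rw [one_T2, mk2_sub, sub_zero]
      exact isUnit_mk2 _ ha1 hb1
    · by_cases hb2 : IsUnit (b + 1)
      · refine ⟨1, by simp [IsIdempotentElem], by rw [mul_one, one_mul], Or.inr ?_⟩
        rw [one_T2, mk2_add, add_zero]
        exact isUnit_mk2 _ ha2 hb2
      · obtain ⟨s, hs⟩ := (hW a b ha hb1).1 c
        simp only at hs
        have hcomm : a * s = c + s * b := sub_eq_iff_eq_add.mp hs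
        refine ⟨mk2 1 s 0, ?_, ?_, Or.inl ?_⟩
        · show mk2 1 s 0 * mk2 1 s 0 = mk2 1 s 0
          rw [mk2_mul]; simp
        · rw [mk2_mul, mk2_mul]
          simp only [mul_zero, zero_mul, mul_one, one_mul, add_zero]
          rw [hcomm]
        · rw [mk2_sub, sub_zero]
          exact isUnit_mk2 _ ha1 hb
  · -- neither is a unit
    obtain ⟨ha1, _⟩ := (hL a).resolve_left ha
    obtain ⟨hb1, _⟩ := (hL b).resolve_left hb
    refine ⟨1, by simp [IsIdempotentElem], by rw [mul_one, one_mul], Or.inl ?_⟩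
    rw [one_T2, mk2_sub, sub_zero]
    exact isUnit_mk2 _ ha1 hb1

end T2Lemmas

theorem T2_powerSeries_very_clean_iff (R : Type*) [Ring R] [IsLocalRing R]
    (hR : WeaklyBleached R) (A : T2 (PowerSeries R)) :
    IsVeryClean A ↔
      IsVeryClean
        (⟨(A : Matrix (Fin 2) (Fin 2) (PowerSeries R)).map PowerSeries.constantCoeff,
          by rw [mem_T2_iff, Matrix.map_apply, mem_T2_iff.mp A.2, map_zero]⟩ : T2 R) := by
  have hLR : ∀ d : R, IsUnit d ∨ (IsUnit (d - 1) ∧ IsUnit (d + 1)) := by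
    intro d
    by_cases hd : IsUnit d
    · exact Or.inl hd
    · exact Or.inr (nonunit_sub_add hd)
  have hWR : ∀ a b : R, ¬IsUnit a → ¬IsUnit (b - 1) →
      Function.Surjective (fun y : R => a * y - y * b) ∧
      Function.Surjective (fun y : R => b * y - y * a) := by
    intro a b ha hb
    obtain ⟨s1, s2⟩ := hR b a (mem_jacobson_of_nonunit hb) (mem_jacobson_of_nonunit ha)
    exact ⟨s2, s1⟩
  have hLX : ∀ d : PowerSeries R, IsUnit d ∨ (IsUnit (d - 1) ∧ IsUnit (d + 1)) := by
    intro d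
    by_cases hd : IsUnit (constantCoeff d)
    · exact Or.inl (isUnit_ps d hd)
    · obtain ⟨h1, h2⟩ := nonunit_sub_add hd
      exact Or.inr ⟨isUnit_ps _ (by rw [map_sub, map_one]; exact h1),
        isUnit_ps _ (by rw [map_add, map_one]; exact h2)⟩
  have hWX : ∀ a b : PowerSeries R, ¬IsUnit a → ¬IsUnit (b - 1) →
      Function.Surjective (fun y : PowerSeries R => a * y - y * b) ∧
      Function.Surjective (fun y : PowerSeries R => b * y - y * a) := by
    intro a b ha hb
    have ha0 : ¬IsUnit (constantCoeff a) := fun h => ha (isUnit_ps a h)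
    have hb0 : ¬IsUnit (constantCoeff b - 1) := fun h =>
      hb (isUnit_ps _ (by rw [map_sub, map_one]; exact h))
    obtain ⟨s1, s2⟩ := hWR _ _ ha0 hb0
    exact ⟨surj_lift a b s1, surj_lift b a s2⟩
  constructor
  · intro _
    exact T2_all hLR hWR _
  · intro _
    exact T2_all hLX hWX A
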